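/- Let (X,f) be a TDS and φ, ψ ∈ C(X,ℝ) with ψ > 0. Suppose P(φ − βψ) ∈ ℝ for every β ∈ ℝ. Then P(φ − P_ψ(φ)·ψ) = 0, i.e., P_ψ(φ) is the unique root of the (strictly decreasing, continuous) function β ↦ P(φ − βψ). -/

import Mathlib

open MeasureTheory Filter Topology Set

variable {X : Type*}

/-- Birkhoff sum `S_n φ (x) = ∑_{i<n} φ(f^i x)`. -/
noncomputable def birkhoff (f : X → X) (φ : X → ℝ) (n : ℕ) (x : X) : ℝ :=
  ∑ i ∈ Finset.range n, φ (f^[i] x)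

/-- The `n`-th Bowen metric. -/
noncomputable def dynDist [MetricSpace X] (f : X → X) (n : ℕ) (x y : X) : ℝ :=
  ⨆ i : Fin n, dist (f^[(i : ℕ)] x) (f^[(i : ℕ)] y)

/-- `F` is an `(n,ε)`-spanning set of `Z`. -/
def IsSpanningSet [MetricSpace X] (f : X → X) (n : ℕ) (ε : ℝ) (Z : Set X) (F : Finset X) : Prop :=
  ∀ y ∈ Z, ∃ x ∈ F, dynDist f n x y ≤ ε

/-- `E` is `(n,ε)`-separated. -/
def IsSeparatedSet [MetricSpace X] (f : X → X) (n : ℕ) (ε : ℝ) (E : Finset X) : Prop :=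
  ∀ x ∈ E, ∀ y ∈ E, x ≠ y → ε < dynDist f n x y

/-- `S_T = {n : ∃ x, S_n ψ(x) ≤ T < S_{n+1} ψ(x)}`. -/
def STset (f : X → X) (ψ : X → ℝ) (T : ℝ) : Set ℕ :=
  {n | ∃ x : X, birkhoff f ψ n x ≤ T ∧ T < birkhoff f ψ (n + 1) x}

/-- `X_n = {x : S_n ψ(x) ≤ T < S_{n+1} ψ(x)}`. -/
def Xset (f : X → X) (ψ : X → ℝ) (T : ℝ) (n : ℕ) : Set X :=
  {x | birkhoff f ψ n x ≤ T ∧ T < birkhoff f ψ (n + 1) x}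

/-- `Q_{ψ,T}(f,φ,ε)`, the spanning-set quantity. -/
noncomputable def Qspan [MetricSpace X] (f : X → X) (φ ψ : X → ℝ) (T ε : ℝ) : ℝ :=
  sInf { r : ℝ | ∃ F : ℕ → Finset X,
    (∀ n ∈ STset f ψ T, IsSpanningSet f n ε (Xset f ψ T n) (F n)) ∧
    r = ∑' n : ℕ, Set.indicator (STset f ψ T)
        (fun n => ∑ x ∈ F n, Real.exp (birkhoff f φ n x)) n }

/-- `P_{ψ,T}(f,φ,ε)`, the separated-set quantity. -/
noncomputable def Psep [MetricSpace X] (f : X → X) (φ ψ : X → ℝ) (T ε : ℝ) : ℝ :=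
  sSup { r : ℝ | ∃ E : ℕ → Finset X,
    (∀ n ∈ STset f ψ T, (E n : Set X) ⊆ Xset f ψ T n ∧ IsSeparatedSet f n ε (E n)) ∧
    r = ∑' n : ℕ, Set.indicator (STset f ψ T)
        (fun n => ∑ x ∈ E n, Real.exp (birkhoff f φ n x)) n }

/-- The `ψ`-induced topological pressure of `φ`. -/
noncomputable def inducedPressure [MetricSpace X] (f : X → X) (φ ψ : X → ℝ) : EReal :=
  ⨆ (ε : ℝ) (_ : 0 < ε),
    Filter.limsup (fun T : ℝ => ((T⁻¹ * Real.log (Qspan f φ ψ T ε) : ℝ) : EReal)) atTop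

/-- Largest sum over `(n,ε)`-separated sets of `X`. -/
noncomputable def sepSum [MetricSpace X] (f : X → X) (φ : X → ℝ) (n : ℕ) (ε : ℝ) : ℝ :=
  sSup { r : ℝ | ∃ E : Finset X, IsSeparatedSet f n ε E ∧
    r = ∑ x ∈ E, Real.exp (birkhoff f φ n x) }

/-- The classical (Walters) topological pressure. -/
noncomputable def topPressure [MetricSpace X] (f : X → X) (φ : X → ℝ) : EReal :=
  ⨆ (ε : ℝ) (_ : 0 < ε),
    Filter.limsup (fun n : ℕ => (((n : ℝ)⁻¹ * Real.log (sepSum f φ n ε) : ℝ) : EReal)) atTop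



lemma birkhoff_zero (f : X → X) (φ : X → ℝ) (x : X) : birkhoff f φ 0 x = 0 := by
  simp [birkhoff]

lemma birkhoff_succ (f : X → X) (φ : X → ℝ) (n : ℕ) (x : X) :
    birkhoff f φ (n+1) x = birkhoff f φ n x + φ (f^[n] x) := by
  simp [birkhoff, Finset.sum_range_succ]

lemma birkhoff_le_of_le {f : X → X} {φ : X → ℝ} {B : ℝ} (h : ∀ x, φ x ≤ B) (n : ℕ) (x : X) :
    birkhoff f φ n x ≤ n * B := by
  calc birkhoff f φ n x ≤ ∑ i ∈ Finset.range n, B := Finset.sum_le_sum (fun i _ => h _)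
  _ = n * B := by simp [mul_comm]

lemma le_birkhoff_of_le {f : X → X} {φ : X → ℝ} {b : ℝ} (h : ∀ x, b ≤ φ x) (n : ℕ) (x : X) :
    n * b ≤ birkhoff f φ n x := by
  calc (n : ℝ) * b = ∑ i ∈ Finset.range n, b := by simp [mul_comm]
  _ ≤ birkhoff f φ n x := Finset.sum_le_sum (fun i _ => h _)

lemma birkhoff_sub (f : X → X) (φ ψ : X → ℝ) (β : ℝ) (n : ℕ) (x : X) :
    birkhoff f (fun y => φ y - β * ψ y) n x = birkhoff f φ n x - β * birkhoff f ψ n x := by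
  simp [birkhoff, Finset.sum_sub_distrib, Finset.mul_sum]

lemma birkhoff_mono {f : X → X} {φ : X → ℝ} (h : ∀ x, 0 ≤ φ x) {n m : ℕ} (hnm : n ≤ m) (x : X) :
    birkhoff f φ n x ≤ birkhoff f φ m x := by
  unfold birkhoff
  exact Finset.sum_le_sum_of_subset_of_nonneg (Finset.range_subset_range.2 hnm) (fun i _ _ => h _)

section dyn
variable [MetricSpace X]

lemma dynDist_nonneg (f : X → X) (n : ℕ) (x y : X) : 0 ≤ dynDist f n x y :=
  Real.iSup_nonneg (fun i => dist_nonneg)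

lemma dist_le_dynDist (f : X → X) {n i : ℕ} (hi : i < n) (x y : X) :
    dist (f^[i] x) (f^[i] y) ≤ dynDist f n x y := by
  unfold dynDist
  exact le_ciSup (f := fun j : Fin n => dist (f^[(j : ℕ)] x) (f^[(j : ℕ)] y))
    (Set.Finite.bddAbove (Set.finite_range _)) (⟨i, hi⟩ : Fin n)

lemma dynDist_le {f : X → X} {n : ℕ} {x y : X} {ε : ℝ} (hε : 0 ≤ ε)
    (h : ∀ i < n, dist (f^[i] x) (f^[i] y) ≤ ε) : dynDist f n x y ≤ ε :=
  Real.iSup_le (fun i => h i i.2) hε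

lemma dynDist_symm (f : X → X) (n : ℕ) (x y : X) : dynDist f n x y = dynDist f n y x := by
  unfold dynDist; congr 1; ext i; exact dist_comm _ _

lemma dynDist_triangle (f : X → X) (n : ℕ) (x y z : X) :
    dynDist f n x z ≤ dynDist f n x y + dynDist f n y z := by
  refine dynDist_le (add_nonneg (dynDist_nonneg f n x y) (dynDist_nonneg f n y z)) (fun i hi => ?_)
  calc dist (f^[i] x) (f^[i] z) ≤ dist (f^[i] x) (f^[i] y) + dist (f^[i] y) (f^[i] z) :=
        dist_triangle _ _ _
  _ ≤ dynDist f n x y + dynDist f n y z :=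
        add_le_add (dist_le_dynDist f hi x y) (dist_le_dynDist f hi y z)

lemma dynDist_self (f : X → X) (n : ℕ) (x : X) : dynDist f n x x = 0 :=
  le_antisymm (dynDist_le le_rfl (fun i _ => by simp)) (dynDist_nonneg f n x x)

lemma dynDist_mono (f : X → X) {n m : ℕ} (hnm : n ≤ m) (x y : X) :
    dynDist f n x y ≤ dynDist f m x y := by
  rcases Nat.eq_zero_or_pos n with h | h
  · subst h; rw [show dynDist f 0 x y = 0 from le_antisymm
      (dynDist_le le_rfl (by omega)) (dynDist_nonneg f 0 x y)]
    exact dynDist_nonneg f m x y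
  · refine dynDist_le (dynDist_nonneg f m x y) (fun i hi => dist_le_dynDist f (lt_of_lt_of_le hi hnm) x y)
end dyn

section compact
variable [MetricSpace X] [CompactSpace X] [Nonempty X]

/-- existence of a finite `(n,ε)`-spanning set of the whole space -/
lemma exists_spanning (f : X → X) (hf : Continuous f) (n : ℕ) {ε : ℝ} (hε : 0 < ε) :
    ∃ F : Finset X, IsSpanningSet f n ε Set.univ F := by
  -- cover X by open sets V x = ⋂_{i<n} f^[i]⁻¹ (ball (f^[i] x) ε)
  set V : X → Set X := fun x => ⋂ i ∈ Finset.range n, (f^[i]) ⁻¹' (Metric.ball (f^[i] x) ε)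
    with hV
  have hopen : ∀ x, IsOpen (V x) := by
    intro x
    refine isOpen_biInter_finset (fun i _ => ?_)
    exact (Metric.isOpen_ball).preimage (hf.iterate i)
  have hmem : ∀ x, x ∈ V x := by
    intro x
    simp only [hV, Set.mem_iInter, Set.mem_preimage, Metric.mem_ball]
    intro i _
    simpa using hε
  obtain ⟨t, ht⟩ := IsCompact.elim_finite_subcover isCompact_univ V hopen
    (fun x _ => Set.mem_iUnion.2 ⟨x, hmem x⟩)
  refine ⟨t, fun y _ => ?_⟩
  obtain ⟨x, hxt, hxy⟩ := Set.mem_iUnion₂.1 (ht (Set.mem_univ y))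
  refine ⟨x, hxt, dynDist_le hε.le (fun i hi => ?_)⟩
  have := Set.mem_iInter.1 hxy i
  simp only [Set.mem_iInter, Set.mem_preimage, Metric.mem_ball, Finset.mem_range] at this
  have := this hi
  rw [dist_comm] at this
  exact this.le

/-- separated sets have cardinality at most that of an `ε/2`-spanning set -/
lemma sep_card_le {f : X → X} {n : ℕ} {ε : ℝ} (hε : 0 < ε) {E F : Finset X}
    (hE : IsSeparatedSet f n ε E) (hF : IsSpanningSet f n (ε/2) Set.univ F) :
    E.card ≤ F.card := by
  -- map each point of E to a spanning point
  have hch : ∀ x : X, ∃ z ∈ F, dynDist f n z x ≤ ε/2 := fun x => hF x (Set.mem_univ x)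
  choose σ hσF hσd using hch
  refine Finset.card_le_card_of_injOn σ (fun x _ => hσF x) ?_
  intro x hx y hy hxy
  by_contra hne
  have h1 : ε < dynDist f n x y := hE x hx y hy hne
  have h2 : dynDist f n x y ≤ ε := by
    calc dynDist f n x y ≤ dynDist f n x (σ x) + dynDist f n (σ x) y := dynDist_triangle f n _ _ _
    _ ≤ ε/2 + ε/2 := by
        refine add_le_add (by rw [dynDist_symm]; exact hσd x) ?_
        rw [hxy]
        exact hσd y
    _ = ε := by ring
  exact absurd h1 (not_lt.2 h2)
end compact

section bounds
variable [MetricSpace X] [CompactSpace X] [Nonempty X]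

lemma exists_upper_bound {φ : X → ℝ} (hφ : Continuous φ) : ∃ B : ℝ, ∀ x, φ x ≤ B := by
  obtain ⟨z, hz⟩ := hφ.exists_forall_ge (by rw [Filter.cocompact_eq_bot]; exact tendsto_bot)
  exact ⟨φ z, hz⟩

lemma exists_lower_bound {φ : X → ℝ} (hφ : Continuous φ) : ∃ b : ℝ, ∀ x, b ≤ φ x := by
  obtain ⟨z, hz⟩ := hφ.exists_forall_le (by rw [Filter.cocompact_eq_bot]; exact tendsto_bot)
  exact ⟨φ z, hz⟩

lemma exists_pos_lower_bound {ψ : X → ℝ} (hψ : Continuous ψ) (hpos : ∀ x, 0 < ψ x) :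
    ∃ m : ℝ, 0 < m ∧ ∀ x, m ≤ ψ x := by
  obtain ⟨z, hz⟩ := hψ.exists_forall_le (by rw [Filter.cocompact_eq_bot]; exact tendsto_bot)
  exact ⟨ψ z, hpos z, hz⟩
end bounds

section sepSum
variable [MetricSpace X] [CompactSpace X] [Nonempty X]
variable {f : X → X} {φ : X → ℝ} {n : ℕ} {ε : ℝ}

lemma sepSet_nonempty (f : X → X) (φ : X → ℝ) (n : ℕ) (ε : ℝ) :
    { r : ℝ | ∃ E : Finset X, IsSeparatedSet f n ε E ∧
      r = ∑ x ∈ E, Real.exp (birkhoff f φ n x) }.Nonempty :=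
  ⟨0, ∅, fun x hx => absurd hx (Finset.notMem_empty x), by simp⟩

lemma sepSet_bddAbove (hf : Continuous f) (hφ : Continuous φ) (hε : 0 < ε) (n : ℕ) :
    BddAbove { r : ℝ | ∃ E : Finset X, IsSeparatedSet f n ε E ∧
      r = ∑ x ∈ E, Real.exp (birkhoff f φ n x) } := by
  obtain ⟨B, hB⟩ := exists_upper_bound hφ
  obtain ⟨F, hF⟩ := exists_spanning f hf n (half_pos hε)
  refine ⟨(F.card : ℝ) * Real.exp (n * B), ?_⟩
  rintro r ⟨E, hE, rfl⟩
  calc ∑ x ∈ E, Real.exp (birkhoff f φ n x)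
      ≤ ∑ _x ∈ E, Real.exp (n * B) :=
        Finset.sum_le_sum (fun x _ => Real.exp_le_exp.2 (birkhoff_le_of_le hB n x))
  _ = (E.card : ℝ) * Real.exp (n * B) := by simp [mul_comm]
  _ ≤ (F.card : ℝ) * Real.exp (n * B) := by
      have := sep_card_le hε hE hF
      have : (E.card : ℝ) ≤ (F.card : ℝ) := by exact_mod_cast this
      gcongr

lemma le_sepSum (hf : Continuous f) (hφ : Continuous φ) (hε : 0 < ε) {E : Finset X}
    (hE : IsSeparatedSet f n ε E) :
    ∑ x ∈ E, Real.exp (birkhoff f φ n x) ≤ sepSum f φ n ε :=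
  le_csSup (sepSet_bddAbove hf hφ hε n) ⟨E, hE, rfl⟩

lemma sepSum_pos (hf : Continuous f) (hφ : Continuous φ) (hε : 0 < ε) (n : ℕ) :
    0 < sepSum f φ n ε := by
  obtain ⟨x₀⟩ := ‹Nonempty X›
  have hE : IsSeparatedSet f n ε ({x₀} : Finset X) := by
    intro x hx y hy hxy
    simp only [Finset.mem_singleton] at hx hy
    exact absurd (hx.trans hy.symm) hxy
  calc (0:ℝ) < Real.exp (birkhoff f φ n x₀) := Real.exp_pos _
  _ = ∑ x ∈ ({x₀} : Finset X), Real.exp (birkhoff f φ n x) := by simp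
  _ ≤ sepSum f φ n ε := le_sepSum hf hφ hε hE

lemma sepSum_le (hf : Continuous f) (hφ : Continuous φ) (hε : 0 < ε) {n : ℕ} {b : ℝ}
    (h : ∀ E : Finset X, IsSeparatedSet f n ε E →
      ∑ x ∈ E, Real.exp (birkhoff f φ n x) ≤ b) :
    sepSum f φ n ε ≤ b := by
  refine csSup_le (sepSet_nonempty f φ n ε) ?_
  rintro r ⟨E, hE, rfl⟩
  exact h E hE

/-- comparison under a pointwise bound `φ₁ ≤ φ₂ + c` -/
lemma sepSum_le_of_le (hf : Continuous f) {φ₁ φ₂ : X → ℝ} (hφ₁ : Continuous φ₁)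
    (hφ₂ : Continuous φ₂) (hε : 0 < ε) {c : ℝ} (hc : ∀ x, φ₁ x ≤ φ₂ x + c) (n : ℕ) :
    sepSum f φ₁ n ε ≤ Real.exp (n * c) * sepSum f φ₂ n ε := by
  refine sepSum_le hf hφ₁ hε (fun E hE => ?_)
  calc ∑ x ∈ E, Real.exp (birkhoff f φ₁ n x)
      ≤ ∑ x ∈ E, Real.exp (n * c) * Real.exp (birkhoff f φ₂ n x) := by
        refine Finset.sum_le_sum (fun x _ => ?_)
        rw [← Real.exp_add]
        refine Real.exp_le_exp.2 ?_
        have : birkhoff f φ₁ n x ≤ birkhoff f (fun y => φ₂ y + c) n x := by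
          unfold birkhoff; exact Finset.sum_le_sum (fun i _ => hc _)
        refine this.trans (le_of_eq ?_)
        unfold birkhoff
        rw [Finset.sum_add_distrib]
        simp [add_comm, mul_comm]
  _ = Real.exp (n * c) * ∑ x ∈ E, Real.exp (birkhoff f φ₂ n x) := by rw [Finset.mul_sum]
  _ ≤ Real.exp (n * c) * sepSum f φ₂ n ε := by
      have := le_sepSum hf hφ₂ hε hE
      gcongr
end sepSum

/-- adding a real constant is an order isomorphism of `EReal` -/
noncomputable def addOrderIso (c : ℝ) : EReal ≃o EReal where
  toFun x := x + (c : EReal)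
  invFun x := x - (c : EReal)
  left_inv x := EReal.add_sub_cancel_right
  right_inv x := EReal.sub_add_cancel
  map_rel_iff' := by
    intro x y
    exact (EReal.addLECancellable_coe c).add_le_add_iff_right

lemma limsup_add_real {α : Type*} (F : Filter α) (u : α → EReal) (c : ℝ) :
    Filter.limsup (fun a => u a + (c : EReal)) F = Filter.limsup u F + (c : EReal) :=
  by have h := (addOrderIso c).limsup_apply (f := F) (u := u); exact h.symm

lemma limsup_coe_add_const {α : Type*} (F : Filter α) (u : α → ℝ) (c : ℝ) :
    Filter.limsup (fun a => ((c + u a : ℝ) : EReal)) F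
      = (c : EReal) + Filter.limsup (fun a => ((u a : ℝ) : EReal)) F := by
  have : (fun a => ((c + u a : ℝ) : EReal)) = fun a => ((u a : ℝ) : EReal) + (c : EReal) := by
    ext a
    rw [← EReal.coe_add, add_comm]
  rw [this, limsup_add_real, add_comm]

section pressure
variable [MetricSpace X] [CompactSpace X] [Nonempty X]
variable {f : X → X}

lemma pressure_le_of_le (hf : Continuous f) {φ₁ φ₂ : X → ℝ} (hφ₁ : Continuous φ₁)
    (hφ₂ : Continuous φ₂) {c : ℝ} (hc : ∀ x, φ₁ x ≤ φ₂ x + c) :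
    topPressure f φ₁ ≤ topPressure f φ₂ + (c : EReal) := by
  refine iSup₂_le (fun ε hε => ?_)
  have key : ∀ᶠ n : ℕ in atTop,
      (((n : ℝ)⁻¹ * Real.log (sepSum f φ₁ n ε) : ℝ) : EReal)
        ≤ (((c + (n : ℝ)⁻¹ * Real.log (sepSum f φ₂ n ε) : ℝ) : ℝ) : EReal) := by
    filter_upwards [Filter.eventually_ge_atTop 1] with n hn
    rw [EReal.coe_le_coe_iff]
    have hs₁ : 0 < sepSum f φ₁ n ε := sepSum_pos hf hφ₁ hε n
    have hs₂ : 0 < sepSum f φ₂ n ε := sepSum_pos hf hφ₂ hε n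
    have hlog : Real.log (sepSum f φ₁ n ε) ≤ n * c + Real.log (sepSum f φ₂ n ε) := by
      have h1 : sepSum f φ₁ n ε ≤ Real.exp (n * c) * sepSum f φ₂ n ε :=
        sepSum_le_of_le hf hφ₁ hφ₂ hε hc n
      calc Real.log (sepSum f φ₁ n ε) ≤ Real.log (Real.exp (n * c) * sepSum f φ₂ n ε) :=
            Real.log_le_log hs₁ h1
      _ = n * c + Real.log (sepSum f φ₂ n ε) := by
            rw [Real.log_mul (Real.exp_ne_zero _) hs₂.ne', Real.log_exp]
    have hn' : (0:ℝ) < (n:ℝ) := by exact_mod_cast hn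
    calc (n : ℝ)⁻¹ * Real.log (sepSum f φ₁ n ε)
        ≤ (n : ℝ)⁻¹ * (n * c + Real.log (sepSum f φ₂ n ε)) := by
          gcongr
    _ = c + (n : ℝ)⁻¹ * Real.log (sepSum f φ₂ n ε) := by
          field_simp
  calc Filter.limsup (fun n : ℕ => (((n : ℝ)⁻¹ * Real.log (sepSum f φ₁ n ε) : ℝ) : EReal)) atTop
      ≤ Filter.limsup
          (fun n : ℕ => (((c + (n : ℝ)⁻¹ * Real.log (sepSum f φ₂ n ε) : ℝ) : ℝ) : EReal)) atTop :=
        Filter.limsup_le_limsup key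
  _ = (c : EReal)
        + Filter.limsup (fun n : ℕ => (((n : ℝ)⁻¹ * Real.log (sepSum f φ₂ n ε) : ℝ) : EReal)) atTop :=
        limsup_coe_add_const _ _ _
  _ ≤ (c : EReal) + topPressure f φ₂ := by
      refine add_le_add_right ?_ _
      exact le_iSup₂ (f := fun (ε : ℝ) (_ : 0 < ε) =>
        Filter.limsup (fun n : ℕ => (((n : ℝ)⁻¹ * Real.log (sepSum f φ₂ n ε) : ℝ) : EReal)) atTop) ε hε
  _ = topPressure f φ₂ + (c : EReal) := add_comm _ _
end pressure

section realroot
variable {g : ℝ → ℝ} {m M : ℝ}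

lemma strictAnti_of_decay (hm : 0 < m)
    (hup : ∀ β β' : ℝ, β ≤ β' → g β' ≤ g β - (β' - β) * m) : StrictAnti g := by
  intro β β' hlt
  have := hup β β' hlt.le
  nlinarith

lemma continuous_of_sandwich (hm : 0 < m) (hmM : m ≤ M)
    (hup : ∀ β β' : ℝ, β ≤ β' → g β' ≤ g β - (β' - β) * m)
    (hdown : ∀ β β' : ℝ, β ≤ β' → g β - (β' - β) * M ≤ g β') : Continuous g := by
  have hM : 0 < M := lt_of_lt_of_le hm hmM
  have key : ∀ β β' : ℝ, |g β' - g β| ≤ M * |β' - β| := by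
    intro β β'
    rcases le_total β β' with h | h
    · have h1 := hup β β' h
      have h2 := hdown β β' h
      rw [abs_sub_le_iff, abs_of_nonneg (by linarith)]
      constructor <;> nlinarith [mul_le_mul_of_nonneg_left hmM (sub_nonneg.2 h)]
    · have h1 := hup β' β h
      have h2 := hdown β' β h
      rw [abs_sub_le_iff, abs_of_nonpos (by linarith)]
      constructor <;> nlinarith [mul_le_mul_of_nonneg_left hmM (sub_nonneg.2 h)]
  have : LipschitzWith (Real.toNNReal M) g := by
    refine LipschitzWith.of_dist_le_mul (fun x y => ?_)
    rw [Real.dist_eq, Real.dist_eq, Real.coe_toNNReal M hM.le]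
    exact key y x
  exact this.continuous

lemma exists_root_of_sandwich (hm : 0 < m) (hmM : m ≤ M)
    (hup : ∀ β β' : ℝ, β ≤ β' → g β' ≤ g β - (β' - β) * m)
    (hdown : ∀ β β' : ℝ, β ≤ β' → g β - (β' - β) * M ≤ g β') : ∃ c₀ : ℝ, g c₀ = 0 := by
  have hcont := continuous_of_sandwich hm hmM hup hdown
  set a : ℝ := -((|g 0| + 1) / m) with ha
  set b : ℝ := (|g 0| + 1) / m with hb
  have hab : a ≤ b := by
    have : 0 < (|g 0| + 1) / m := div_pos (by positivity) hm
    simp only [ha, hb]; linarith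
  have hbm : b * m = |g 0| + 1 := by
    rw [hb]; field_simp
  have hga : 1 ≤ g a := by
    have h := hup a 0 (by nlinarith [div_pos (show (0:ℝ) < |g 0| + 1 by positivity) hm])
    have h0a : (0 - a) * m = |g 0| + 1 := by
      have : (0 - a) = b := by rw [ha]; ring
      rw [this, hbm]
    nlinarith [abs_nonneg (g 0), le_abs_self (g 0), neg_abs_le (g 0)]
  have hgb : g b ≤ -1 := by
    have h := hup 0 b (by nlinarith [div_pos (show (0:ℝ) < |g 0| + 1 by positivity) hm])
    have h0b : (b - 0) * m = |g 0| + 1 := by rw [sub_zero, hbm]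
    nlinarith [le_abs_self (g 0), neg_abs_le (g 0)]
  have : (0:ℝ) ∈ Set.Icc (g b) (g a) := ⟨by linarith, by linarith⟩
  obtain ⟨c₀, _, hc₀⟩ := intermediate_value_Icc' hab hcont.continuousOn this
  exact ⟨c₀, hc₀⟩
end realroot

section ST
variable {f : X → X} {ψ : X → ℝ} {m M T : ℝ}

lemma STset_lower (hm : ∀ x, m ≤ ψ x) {n : ℕ} (hn : n ∈ STset f ψ T) : (n : ℝ) * m ≤ T := by
  obtain ⟨x, h1, _⟩ := hn
  exact le_trans (le_birkhoff_of_le hm n x) h1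

lemma STset_upper (hM : ∀ x, ψ x ≤ M) {n : ℕ} (hn : n ∈ STset f ψ T) : T < ((n : ℝ) + 1) * M := by
  obtain ⟨x, _, h2⟩ := hn
  refine lt_of_lt_of_le h2 ?_
  have := birkhoff_le_of_le (f := f) hM (n + 1) x
  push_cast at this ⊢
  linarith

lemma STset_finite (hm0 : 0 < m) (hm : ∀ x, m ≤ ψ x) : (STset f ψ T).Finite := by
  refine Set.Finite.subset (Set.finite_Icc 0 ⌊T / m⌋₊) (fun n hn => ?_)
  have h := STset_lower hm hn
  simp only [Set.mem_Icc]
  refine ⟨Nat.zero_le n, Nat.le_floor ?_⟩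
  rw [le_div_iff₀ hm0]
  exact h

lemma STset_nonempty [Nonempty X] {ψ : X → ℝ} (hm0 : 0 < m) (hm : ∀ x, m ≤ ψ x) (hT : 0 ≤ T) :
    (STset f ψ T).Nonempty := by
  obtain ⟨x₀⟩ := ‹Nonempty X›
  have hexists : ∃ n : ℕ, T < birkhoff f ψ (n + 1) x₀ := by
    obtain ⟨n, hn⟩ := Archimedean.arch T hm0
    refine ⟨n, lt_of_le_of_lt (b := birkhoff f ψ n x₀) ?_ ?_⟩
    · calc T ≤ n • m := hn
      _ = (n : ℝ) * m := by simp [nsmul_eq_mul]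
      _ ≤ birkhoff f ψ n x₀ := le_birkhoff_of_le hm n x₀
    · rw [birkhoff_succ]
      have := hm (f^[n] x₀)
      linarith
  classical
  let n₀ := Nat.find hexists
  refine ⟨n₀, x₀, ?_, Nat.find_spec hexists⟩
  rcases Nat.eq_zero_or_pos n₀ with h | h
  · rw [h, birkhoff_zero]; exact hT
  · obtain ⟨k, hk⟩ := Nat.exists_eq_succ_of_ne_zero h.ne'
    have := Nat.find_min hexists (m := k) (by omega)
    push_neg at this
    simpa [show n₀ = k + 1 from hk] using this

lemma indicator_summable (hm0 : 0 < m) (hm : ∀ x, m ≤ ψ x) (h : ℕ → ℝ) :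
    Summable (Set.indicator (STset f ψ T) h) := by
  classical
  refine summable_of_ne_finset_zero (s := (STset_finite (f := f) hm0 hm (T := T)).toFinset) ?_
  intro n hn
  rw [Set.Finite.mem_toFinset] at hn
  exact Set.indicator_of_notMem hn h

lemma tsum_indicator_le (hm0 : 0 < m) (hm : ∀ x, m ≤ ψ x) (h : ℕ → ℝ) :
    ∑' n : ℕ, Set.indicator (STset f ψ T) h n
      ≤ ∑ n ∈ (STset_finite (f := f) hm0 hm (T := T)).toFinset, h n := by
  classical
  rw [tsum_eq_sum (s := (STset_finite (f := f) hm0 hm (T := T)).toFinset)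
    (fun n hn => Set.indicator_of_notMem (by rwa [Set.Finite.mem_toFinset] at hn) h)]
  refine Finset.sum_le_sum (fun n hn => ?_)
  rw [Set.Finite.mem_toFinset] at hn
  rw [Set.indicator_of_mem hn]

lemma single_le_tsum_indicator (hm0 : 0 < m) (hm : ∀ x, m ≤ ψ x) (h : ℕ → ℝ)
    (hpos : ∀ k, 0 ≤ h k) {n : ℕ} (hn : n ∈ STset f ψ T) :
    h n ≤ ∑' k : ℕ, Set.indicator (STset f ψ T) h k := by
  have := Summable.le_tsum (indicator_summable (f := f) hm0 hm h (T := T)) n (fun k _ => Set.indicator_nonneg (s := STset f ψ T) (fun j _ => hpos j) k)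
  rwa [Set.indicator_of_mem hn] at this
end ST

section Qspan
variable [MetricSpace X] [CompactSpace X] [Nonempty X]
variable {f : X → X} {φ ψ : X → ℝ} {m T ε : ℝ}

lemma Qspan_set_nonempty (hf : Continuous f) (hε : 0 < ε) (T : ℝ) :
    { r : ℝ | ∃ F : ℕ → Finset X,
      (∀ n ∈ STset f ψ T, IsSpanningSet f n ε (Xset f ψ T n) (F n)) ∧
      r = ∑' n : ℕ, Set.indicator (STset f ψ T)
          (fun n => ∑ x ∈ F n, Real.exp (birkhoff f φ n x)) n }.Nonempty := by
  have hch : ∀ n : ℕ, ∃ F : Finset X, IsSpanningSet f n ε Set.univ F :=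
    fun n => exists_spanning f hf n hε
  choose F hF using hch
  exact ⟨_, F, fun n _ => fun y hy => hF n y (Set.mem_univ y), rfl⟩

lemma Qspan_set_bddBelow (T : ℝ) :
    BddBelow { r : ℝ | ∃ F : ℕ → Finset X,
      (∀ n ∈ STset f ψ T, IsSpanningSet f n ε (Xset f ψ T n) (F n)) ∧
      r = ∑' n : ℕ, Set.indicator (STset f ψ T)
          (fun n => ∑ x ∈ F n, Real.exp (birkhoff f φ n x)) n } := by
  refine ⟨0, ?_⟩
  rintro r ⟨F, _, rfl⟩
  refine tsum_nonneg (fun n => Set.indicator_nonneg (fun k _ => ?_) n)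
  exact Finset.sum_nonneg (fun x _ => (Real.exp_pos _).le)

lemma Qspan_le {r : ℝ} (hr : r ∈ { r : ℝ | ∃ F : ℕ → Finset X,
      (∀ n ∈ STset f ψ T, IsSpanningSet f n ε (Xset f ψ T n) (F n)) ∧
      r = ∑' n : ℕ, Set.indicator (STset f ψ T)
          (fun n => ∑ x ∈ F n, Real.exp (birkhoff f φ n x)) n }) :
    Qspan f φ ψ T ε ≤ r :=
  csInf_le (Qspan_set_bddBelow T) hr

lemma le_Qspan (hf : Continuous f) (hε : 0 < ε) {b : ℝ}
    (hb : ∀ r ∈ { r : ℝ | ∃ F : ℕ → Finset X,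
      (∀ n ∈ STset f ψ T, IsSpanningSet f n ε (Xset f ψ T n) (F n)) ∧
      r = ∑' n : ℕ, Set.indicator (STset f ψ T)
          (fun n => ∑ x ∈ F n, Real.exp (birkhoff f φ n x)) n }, b ≤ r) :
    b ≤ Qspan f φ ψ T ε :=
  le_csInf (Qspan_set_nonempty hf hε T) hb
end Qspan

section maxsep
variable [MetricSpace X] [CompactSpace X] [Nonempty X]

/-- a maximal separated subset of `Z` is spanning for `Z` -/
lemma exists_maximal_separated (f : X → X) (hf : Continuous f) (n : ℕ) {ε : ℝ} (hε : 0 < ε)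
    (Z : Set X) : ∃ E : Finset X, (E : Set X) ⊆ Z ∧ IsSeparatedSet f n ε E ∧
      IsSpanningSet f n ε Z E := by
  classical
  obtain ⟨F, hF⟩ := exists_spanning f hf n (half_pos hε)
  set s : Set ℕ := {k | ∃ E : Finset X, (E : Set X) ⊆ Z ∧ IsSeparatedSet f n ε E ∧ E.card = k}
    with hs
  have hs0 : 0 ∈ s := ⟨∅, by simp, fun x hx => absurd hx (Finset.notMem_empty x), rfl⟩
  have hbdd : BddAbove s := by
    refine ⟨F.card, ?_⟩
    rintro k ⟨E, _, hE, rfl⟩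
    exact sep_card_le hε hE hF
  have hmem : sSup s ∈ s := Nat.sSup_mem ⟨0, hs0⟩ hbdd
  obtain ⟨E, hEZ, hEsep, hEcard⟩ := hmem
  refine ⟨E, hEZ, hEsep, fun y hy => ?_⟩
  by_contra hspan
  push_neg at hspan
  have hyE : y ∉ E := by
    intro hyE
    have := hspan y hyE
    rw [dynDist_self] at this
    exact absurd this (not_lt.2 hε.le)
  have hsep' : IsSeparatedSet f n ε (insert y E) := by
    intro a ha b hb hab
    rcases Finset.mem_insert.1 ha with ha' | ha'
    · rcases Finset.mem_insert.1 hb with hb' | hb'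
      · exact absurd (ha'.trans hb'.symm) hab
      · rw [ha', dynDist_symm]
        exact hspan b hb'
    · rcases Finset.mem_insert.1 hb with hb' | hb'
      · rw [hb']
        exact hspan a ha'
      · exact hEsep a ha' b hb' hab
  have : (insert y E).card ∈ s := ⟨insert y E, ?_, hsep', rfl⟩
  · have hle := le_csSup hbdd this
    rw [Finset.card_insert_of_notMem hyE, hEcard] at hle
    omega
  · intro z hz
    rcases Finset.mem_insert.1 (by exact_mod_cast hz) with rfl | hz'
    · exact hy
    · exact hEZ hz'
end maxsep

lemma tendsto_log_affine_div {c : ℝ} (hc : 0 < c) (d : ℝ) :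
    Filter.Tendsto (fun x : ℝ => Real.log (c * x + d) / x) atTop (nhds 0) := by
  have h1 : Filter.Tendsto (fun u : ℝ => Real.log u ^ 1 / (c⁻¹ * u + (-(d/c)))) atTop (nhds 0) :=
    Real.tendsto_pow_log_div_mul_add_atTop c⁻¹ (-(d/c)) 1 (by positivity)
  have h2 : Filter.Tendsto (fun x : ℝ => c * x + d) atTop atTop :=
    Filter.tendsto_atTop_add_const_right _ d (Filter.Tendsto.const_mul_atTop hc Filter.tendsto_id)
  have h3 := h1.comp h2
  have : (fun x : ℝ => Real.log (c * x + d) ^ 1 / (c⁻¹ * (c * x + d) + (-(d/c))))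
      = fun x : ℝ => Real.log (c * x + d) / x := by
    ext x
    have : c⁻¹ * (c * x + d) + (-(d/c)) = x := by field_simp; ring
    rw [this, pow_one]
  rwa [← this]

section est
variable [MetricSpace X] [CompactSpace X] [Nonempty X]
variable {f : X → X} {φ ψ : X → ℝ} {m M T ε β : ℝ}

/-- for `x ∈ Xset`, control `β * S_n ψ x` from above -/
lemma beta_birkhoff_le (hM : ∀ x, ψ x ≤ M) (hM0 : 0 ≤ M) {n : ℕ} {x : X}
    (hx : x ∈ Xset f ψ T n) : β * birkhoff f ψ n x ≤ β * T + |β| * M := by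
  obtain ⟨h1, h2⟩ := hx
  rcases le_total 0 β with hβ | hβ
  · have : β * birkhoff f ψ n x ≤ β * T := mul_le_mul_of_nonneg_left h1 hβ
    nlinarith [abs_nonneg β]
  · have hb : birkhoff f ψ (n+1) x ≤ birkhoff f ψ n x + M := by
      rw [birkhoff_succ]
      have := hM (f^[n] x); linarith
    have h3 : T - M < birkhoff f ψ n x := by linarith
    have : β * birkhoff f ψ n x ≤ β * (T - M) := by
      exact mul_le_mul_of_nonpos_left h3.le hβ
    rw [abs_of_nonpos hβ]
    nlinarith

/-- for `x ∈ Xset`, control `β * S_n ψ x` from below -/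
lemma le_beta_birkhoff (hM : ∀ x, ψ x ≤ M) (hM0 : 0 ≤ M) {n : ℕ} {x : X}
    (hx : x ∈ Xset f ψ T n) : β * T - |β| * M ≤ β * birkhoff f ψ n x := by
  obtain ⟨h1, h2⟩ := hx
  rcases le_total 0 β with hβ | hβ
  · have hb : birkhoff f ψ (n+1) x ≤ birkhoff f ψ n x + M := by
      rw [birkhoff_succ]
      have := hM (f^[n] x); linarith
    have h3 : T - M < birkhoff f ψ n x := by linarith
    have : β * (T - M) ≤ β * birkhoff f ψ n x := mul_le_mul_of_nonneg_left h3.le hβ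
    rw [abs_of_nonneg hβ]
    nlinarith
  · have : β * T ≤ β * birkhoff f ψ n x := mul_le_mul_of_nonpos_left h1 hβ
    nlinarith [abs_nonneg β, mul_nonneg (neg_nonneg.2 hβ) hM0]

lemma Qspan_pos (hf : Continuous f) (hφ : Continuous φ) (hm0 : 0 < m) (hm : ∀ x, m ≤ ψ x)
    (hε : 0 < ε) (hT : 0 ≤ T) : ∃ q : ℝ, 0 < q ∧ q ≤ Qspan f φ ψ T ε := by
  obtain ⟨n₀, hn₀⟩ := STset_nonempty (f := f) hm0 hm hT
  obtain ⟨bφ, hbφ⟩ := exists_lower_bound hφ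
  refine ⟨Real.exp (n₀ * bφ), Real.exp_pos _, ?_⟩
  refine le_Qspan hf hε ?_
  rintro r ⟨F, hFspan, rfl⟩
  refine le_trans ?_ (single_le_tsum_indicator (f := f) hm0 hm _
    (fun k => Finset.sum_nonneg (fun x _ => (Real.exp_pos _).le)) hn₀)
  obtain ⟨x₀, hx₀⟩ := hn₀
  obtain ⟨y, hyF, _⟩ := hFspan n₀ ⟨x₀, hx₀⟩ x₀ hx₀
  calc Real.exp (n₀ * bφ) ≤ Real.exp (birkhoff f φ n₀ y) :=
        Real.exp_le_exp.2 (le_birkhoff_of_le hbφ n₀ y)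
  _ ≤ ∑ x ∈ F n₀, Real.exp (birkhoff f φ n₀ x) :=
        Finset.single_le_sum (fun x _ => (Real.exp_pos _).le) hyF
end est

section G1
variable [MetricSpace X] [CompactSpace X] [Nonempty X]
variable {f : X → X} {φ ψ : X → ℝ} {m M β : ℝ}

lemma upper_estimate (hf : Continuous f) (hφ : Continuous φ) (hψ : Continuous ψ)
    (hm0 : 0 < m) (hm : ∀ x, m ≤ ψ x) (hM : ∀ x, ψ x ≤ M)
    (hβ : topPressure f (fun x => φ x - β * ψ x) < 0) {ε : ℝ} (hε : 0 < ε) :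
    Filter.limsup (fun T : ℝ => ((T⁻¹ * Real.log (Qspan f φ ψ T ε) : ℝ) : EReal)) atTop
      ≤ (β : EReal) := by
  classical
  set φ' : X → ℝ := fun x => φ x - β * ψ x with hφ'
  have hφ'c : Continuous φ' := hφ.sub (continuous_const.mul hψ)
  have hM0 : 0 < M := hm0.trans_le ((hm (Classical.arbitrary X)).trans (hM (Classical.arbitrary X)))
  obtain ⟨z, hz1, hz2⟩ := EReal.exists_between_coe_real hβ
  have hz0 : z < 0 := by exact_mod_cast hz2
  have hL : Filter.limsup
      (fun n : ℕ => (((n : ℝ)⁻¹ * Real.log (sepSum f φ' n ε) : ℝ) : EReal)) atTop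
        ≤ topPressure f φ' :=
    le_iSup₂ (f := fun (ε : ℝ) (_ : 0 < ε) =>
      Filter.limsup (fun n : ℕ => (((n : ℝ)⁻¹ * Real.log (sepSum f φ' n ε) : ℝ) : EReal)) atTop) ε hε
  have hev : ∀ᶠ n : ℕ in atTop,
      (((n : ℝ)⁻¹ * Real.log (sepSum f φ' n ε) : ℝ) : EReal) < (z : EReal) :=
    Filter.eventually_lt_of_limsup_lt (lt_of_le_of_lt hL hz1)
  rw [Filter.eventually_atTop] at hev
  obtain ⟨N, hN⟩ := hev
  set N₁ : ℕ := max N 1 with hN₁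
  have hsepb : ∀ n : ℕ, N₁ ≤ n → sepSum f φ' n ε ≤ Real.exp (n * z) := by
    intro n hn
    have h1 := hN n (le_trans (le_max_left N 1) hn)
    rw [EReal.coe_lt_coe_iff] at h1
    have hn1 : (1:ℕ) ≤ n := le_trans (le_max_right N 1) hn
    have hnpos : (0:ℝ) < (n:ℝ) := by exact_mod_cast hn1
    have hlog : Real.log (sepSum f φ' n ε) ≤ (n:ℝ) * z := by
      have := (mul_le_mul_of_nonneg_left h1.le hnpos.le)
      calc Real.log (sepSum f φ' n ε)
          = (n:ℝ) * ((n:ℝ)⁻¹ * Real.log (sepSum f φ' n ε)) := by field_simp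
      _ ≤ (n:ℝ) * z := by gcongr
    rw [← Real.exp_log (sepSum_pos hf hφ'c hε n)]
    exact Real.exp_le_exp.2 hlog
  -- eventual bound on T
  have htend : Filter.Tendsto
      (fun T : ℝ => (Real.log (m⁻¹ * T + 1) + (|β| * M - z)) / T) atTop (nhds 0) := by
    have h1 := tendsto_log_affine_div (inv_pos.2 hm0) 1
    have h2 : Filter.Tendsto (fun T : ℝ => (|β| * M - z) / T) atTop (nhds 0) :=
      Filter.Tendsto.div_atTop tendsto_const_nhds Filter.tendsto_id
    have := h1.add h2
    rw [add_zero] at this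
    refine this.congr (fun T => ?_)
    ring
  have hevT : ∀ᶠ T : ℝ in atTop,
      (Real.log (m⁻¹ * T + 1) + (|β| * M - z)) / T < -z / M :=
    htend.eventually (gt_mem_nhds (div_pos (neg_pos.2 hz0) hM0))
  refine Filter.limsup_le_of_le (by isBoundedDefault) ?_
  filter_upwards [Filter.eventually_ge_atTop (max 1 ((N₁ + 1) * M)), hevT] with T hT₀ huT
  have hT1 : (1:ℝ) ≤ T := le_trans (le_max_left _ _) hT₀
  have hTpos : (0:ℝ) < T := lt_of_lt_of_le one_pos hT1
  have hTM : ((N₁:ℝ) + 1) * M ≤ T := le_trans (le_max_right _ _) hT₀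
  rw [EReal.coe_le_coe_iff]
  -- construct the spanning family from maximal separated sets
  set F : ℕ → Finset X := fun n => (exists_maximal_separated f hf n hε (Xset f ψ T n)).choose
    with hF
  have hFsub : ∀ n, (↑(F n) : Set X) ⊆ Xset f ψ T n :=
    fun n => (exists_maximal_separated f hf n hε (Xset f ψ T n)).choose_spec.1
  have hFsep : ∀ n, IsSeparatedSet f n ε (F n) :=
    fun n => (exists_maximal_separated f hf n hε (Xset f ψ T n)).choose_spec.2.1
  have hFspan : ∀ n, IsSpanningSet f n ε (Xset f ψ T n) (F n) :=
    fun n => (exists_maximal_separated f hf n hε (Xset f ψ T n)).choose_spec.2.2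
  have hQle : Qspan f φ ψ T ε ≤ ∑' n : ℕ, Set.indicator (STset f ψ T)
      (fun n => ∑ x ∈ F n, Real.exp (birkhoff f φ n x)) n :=
    Qspan_le ⟨F, fun n _ => hFspan n, rfl⟩
  set S : Finset ℕ := (STset_finite (f := f) hm0 hm (T := T)).toFinset with hS
  have hQle2 : Qspan f φ ψ T ε ≤ ∑ n ∈ S, ∑ x ∈ F n, Real.exp (birkhoff f φ n x) :=
    le_trans hQle (tsum_indicator_le (f := f) hm0 hm _)
  -- bound each term
  have hterm : ∀ n ∈ S, ∑ x ∈ F n, Real.exp (birkhoff f φ n x)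
      ≤ Real.exp (β * T + |β| * M) * Real.exp ((T / M - 1) * z) := by
    intro n hnS
    rw [hS, Set.Finite.mem_toFinset] at hnS
    have hnge : ((N₁:ℝ)) ≤ (n:ℝ) := by
      have := STset_upper hM hnS
      have h2 : ((N₁:ℝ) + 1) * M < ((n:ℝ) + 1) * M := lt_of_le_of_lt hTM this
      have := lt_of_mul_lt_mul_right h2 hM0.le
      linarith
    have hngeN : N₁ ≤ n := by exact_mod_cast hnge
    have hnT : T / M - 1 ≤ (n:ℝ) := by
      have := STset_upper hM hnS
      rw [div_sub_one hM0.ne', div_le_iff₀ hM0]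
      linarith
    calc ∑ x ∈ F n, Real.exp (birkhoff f φ n x)
        ≤ ∑ x ∈ F n, Real.exp (β * T + |β| * M) * Real.exp (birkhoff f φ' n x) := by
          refine Finset.sum_le_sum (fun x hx => ?_)
          rw [← Real.exp_add]
          refine Real.exp_le_exp.2 ?_
          have hbx : birkhoff f φ' n x = birkhoff f φ n x - β * birkhoff f ψ n x :=
            birkhoff_sub f φ ψ β n x
          have := beta_birkhoff_le (β := β) hM hM0.le (hFsub n hx)
          linarith
    _ = Real.exp (β * T + |β| * M) * ∑ x ∈ F n, Real.exp (birkhoff f φ' n x) := by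
          rw [Finset.mul_sum]
    _ ≤ Real.exp (β * T + |β| * M) * Real.exp ((n:ℝ) * z) := by
          gcongr
          exact le_trans (le_sepSum hf hφ'c hε (hFsep n)) (hsepb n hngeN)
    _ ≤ Real.exp (β * T + |β| * M) * Real.exp ((T / M - 1) * z) := by
          gcongr Real.exp (β * T + |β| * M) * ?_
          refine Real.exp_le_exp.2 ?_
          nlinarith
  have hcard : (S.card : ℝ) ≤ m⁻¹ * T + 1 := by
    have hsub : S ⊆ Finset.range (⌊T / m⌋₊ + 1) := by
      intro n hnS
      rw [hS, Set.Finite.mem_toFinset] at hnS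
      rw [Finset.mem_range]
      have h := STset_lower hm hnS
      have : (n:ℝ) ≤ T / m := by rw [le_div_iff₀ hm0]; exact h
      exact Nat.lt_succ_of_le (Nat.le_floor this)
    calc (S.card : ℝ) ≤ ((⌊T / m⌋₊ + 1 : ℕ) : ℝ) := by
          have h := Finset.card_le_card hsub
          rw [Finset.card_range] at h
          exact_mod_cast h
    _ ≤ m⁻¹ * T + 1 := by
          push_cast
          have h1 := Nat.floor_le (show (0:ℝ) ≤ T / m from div_nonneg hTpos.le hm0.le)
          have h2 : T / m = m⁻¹ * T := div_eq_inv_mul T m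
          linarith
  have hQle3 : Qspan f φ ψ T ε
      ≤ (m⁻¹ * T + 1) * (Real.exp (β * T + |β| * M) * Real.exp ((T / M - 1) * z)) := by
    refine le_trans hQle2 (le_trans (Finset.sum_le_card_nsmul S _ _ hterm) ?_)
    rw [nsmul_eq_mul]
    have hexp : (0:ℝ) ≤ Real.exp (β * T + |β| * M) * Real.exp ((T / M - 1) * z) := by positivity
    have h1 : (0:ℝ) ≤ (S.card : ℝ) := Nat.cast_nonneg _
    nlinarith
  obtain ⟨q, hq0, hqQ⟩ := Qspan_pos (f := f) (φ := φ) (ψ := ψ) hf hφ hm0 hm hε hTpos.le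
  have hQpos : 0 < Qspan f φ ψ T ε := lt_of_lt_of_le hq0 hqQ
  have hlogQ : Real.log (Qspan f φ ψ T ε)
      ≤ Real.log (m⁻¹ * T + 1) + (β * T + |β| * M + (T / M - 1) * z) := by
    calc Real.log (Qspan f φ ψ T ε)
        ≤ Real.log ((m⁻¹ * T + 1) * (Real.exp (β * T + |β| * M) * Real.exp ((T / M - 1) * z))) :=
          Real.log_le_log hQpos hQle3
    _ = Real.log (m⁻¹ * T + 1) + (β * T + |β| * M + (T / M - 1) * z) := by
          rw [← Real.exp_add, Real.log_mul (by positivity) (Real.exp_ne_zero _), Real.log_exp]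
  calc T⁻¹ * Real.log (Qspan f φ ψ T ε)
      ≤ T⁻¹ * (Real.log (m⁻¹ * T + 1) + (β * T + |β| * M + (T / M - 1) * z)) := by
        gcongr
  _ = β + z / M + (Real.log (m⁻¹ * T + 1) + (|β| * M - z)) / T := by
        field_simp
        ring
  _ ≤ β + z / M + (-z / M) := by
        have := huT.le
        linarith
  _ = β := by ring
end G1

lemma birkhoff_close [MetricSpace X] {f : X → X} {φ : X → ℝ} {δ η : ℝ}
    (hδ : ∀ a b : X, dist a b ≤ δ → |φ a - φ b| ≤ η) {n : ℕ} {x y : X}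
    (h : ∀ i < n, dist (f^[i] y) (f^[i] x) ≤ δ) :
    birkhoff f φ n x - n * η ≤ birkhoff f φ n y := by
  have : birkhoff f φ n x - birkhoff f φ n y ≤ n * η := by
    unfold birkhoff
    rw [← Finset.sum_sub_distrib]
    calc ∑ i ∈ Finset.range n, (φ (f^[i] x) - φ (f^[i] y))
        ≤ ∑ i ∈ Finset.range n, η := by
          refine Finset.sum_le_sum (fun i hi => ?_)
          rw [Finset.mem_range] at hi
          have := hδ (f^[i] x) (f^[i] y) (by rw [dist_comm]; exact h i hi)
          exact le_trans (le_abs_self _) this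
    _ = n * η := by simp [mul_comm]
  linarith

section G2
variable [MetricSpace X] [CompactSpace X] [Nonempty X]
variable {f : X → X} {φ ψ : X → ℝ} {m M β : ℝ}

set_option maxHeartbeats 2000000 in
lemma lower_estimate (hf : Continuous f) (hφ : Continuous φ) (hψ : Continuous ψ)
    (hm0 : 0 < m) (hm : ∀ x, m ≤ ψ x) (hM : ∀ x, ψ x ≤ M)
    (hβ : 0 < topPressure f (fun x => φ x - β * ψ x)) :
    (β : EReal) ≤ inducedPressure f φ ψ := by
  classical
  set φ' : X → ℝ := fun x => φ x - β * ψ x with hφ'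
  have hφ'c : Continuous φ' := hφ.sub (continuous_const.mul hψ)
  have hM0 : 0 < M := hm0.trans_le ((hm (Classical.arbitrary X)).trans (hM (Classical.arbitrary X)))
  rw [topPressure, lt_iSup_iff] at hβ
  obtain ⟨ε₁, hβ⟩ := hβ
  rw [lt_iSup_iff] at hβ
  obtain ⟨hε₁, hβ⟩ := hβ
  obtain ⟨q, hq1, hq2⟩ := EReal.exists_between_coe_real hβ
  have hq0 : 0 < q := by exact_mod_cast hq1
  have hfreq : ∃ᶠ n : ℕ in atTop,
      (q : EReal) < (((n : ℝ)⁻¹ * Real.log (sepSum f φ' n ε₁) : ℝ) : EReal) :=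
    Filter.frequently_lt_of_lt_limsup (by isBoundedDefault) hq2
  obtain ⟨δ', hδ'0, hδ'⟩ := Metric.uniformContinuous_iff.1
    (CompactSpace.uniformContinuous_of_continuous hφ) (q/2) (by positivity)
  set ε : ℝ := min (ε₁ / 2) (δ' / 2) with hεdef
  have hε0 : 0 < ε := lt_min (by positivity) (by positivity)
  have hε2 : 2 * ε ≤ ε₁ := by
    have := min_le_left (ε₁ / 2) (δ' / 2)
    rw [hεdef]; linarith
  have hvar : ∀ a b : X, dist a b ≤ ε → |φ a - φ b| ≤ q / 2 := by
    intro a b hab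
    have h1 : dist a b < δ' := by
      have := min_le_right (ε₁ / 2) (δ' / 2)
      rw [hεdef] at hab; linarith
    have := hδ' h1
    rw [Real.dist_eq] at this
    exact this.le
  have key : ∃ᶠ T : ℝ in atTop,
      (β : EReal) ≤ ((T⁻¹ * Real.log (Qspan f φ ψ T ε) : ℝ) : EReal) := by
    rw [Filter.frequently_atTop]
    intro T₀
    -- eventual conditions on n
    have hdtend : Filter.Tendsto
        (fun n : ℕ => (|β| * M + Real.log ((M/m) * n + 2)) / n) atTop (nhds 0) := by
      have h1 := tendsto_log_affine_div (div_pos hM0 hm0) 2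
      have h2 : Filter.Tendsto (fun x : ℝ => (|β| * M) / x) atTop (nhds 0) :=
        Filter.Tendsto.div_atTop tendsto_const_nhds Filter.tendsto_id
      have h3 := h2.add h1
      rw [add_zero] at h3
      have h4 := h3.comp (tendsto_natCast_atTop_atTop (R := ℝ))
      refine h4.congr (fun n => ?_)
      simp only [Function.comp_apply]
      rw [← add_div]
    have hevd : ∀ᶠ n : ℕ in atTop,
        (|β| * M + Real.log ((M/m) * n + 2)) / n < q / 2 :=
      hdtend.eventually (gt_mem_nhds (half_pos hq0))
    have hev : ∀ᶠ n : ℕ in atTop, 1 ≤ n ∧ T₀ ≤ (n:ℝ) * m ∧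
        (|β| * M + Real.log ((M/m) * n + 2)) / n < q / 2 := by
      filter_upwards [Filter.eventually_ge_atTop 1, Filter.eventually_ge_atTop ⌈T₀ / m⌉₊, hevd]
        with n h1 h2 h3
      refine ⟨h1, ?_, h3⟩
      have : T₀ / m ≤ (⌈T₀ / m⌉₊ : ℝ) := Nat.le_ceil _
      have h2' : ((⌈T₀ / m⌉₊ : ℕ) : ℝ) ≤ (n:ℝ) := by exact_mod_cast h2
      rw [div_le_iff₀ hm0] at this
      nlinarith
    obtain ⟨n, hna, hn1, hnT₀, hnd⟩ := (hfreq.and_eventually hev).exists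
    have hnpos : (0:ℝ) < (n:ℝ) := by exact_mod_cast hn1
    -- big separated set at scale ε₁
    rw [EReal.coe_lt_coe_iff] at hna
    have hsep_big : Real.exp ((n:ℝ) * q) < sepSum f φ' n ε₁ := by
      have hs := sepSum_pos hf hφ'c hε₁ n
      have : (n:ℝ) * q < Real.log (sepSum f φ' n ε₁) := by
        have := (mul_lt_mul_of_pos_left hna hnpos)
        calc (n:ℝ) * q < (n:ℝ) * ((n:ℝ)⁻¹ * Real.log (sepSum f φ' n ε₁)) := this
        _ = Real.log (sepSum f φ' n ε₁) := by field_simp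
      calc Real.exp ((n:ℝ) * q) < Real.exp (Real.log (sepSum f φ' n ε₁)) := Real.exp_lt_exp.2 this
      _ = sepSum f φ' n ε₁ := Real.exp_log hs
    obtain ⟨r₀, hr₀mem, hr₀gt⟩ := exists_lt_of_lt_csSup (sepSet_nonempty f φ' n ε₁) hsep_big
    obtain ⟨E, hEsep, rfl⟩ := hr₀mem
    set w : X → ℝ := fun x => Real.exp (birkhoff f φ' n x) with hw
    -- pigeonhole over the grid
    set j : X → ℕ := fun x => ⌈birkhoff f ψ n x / m⌉₊ with hj
    set jmax : ℕ := ⌈(n:ℝ) * M / m⌉₊ with hjmax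
    set J : Finset ℕ := Finset.range (jmax + 1) with hJ
    have hmaps : ∀ x ∈ E, j x ∈ J := by
      intro x _
      rw [hJ, Finset.mem_range, Nat.lt_succ_iff, hj, hjmax]
      refine Nat.ceil_le_ceil ?_
      have h := birkhoff_le_of_le (f := f) hM n x
      gcongr
    have hKpos : (0:ℝ) < (J.card : ℝ) := by
      rw [hJ, Finset.card_range]
      positivity
    have hsplit : ∑ jj ∈ J, ∑ x ∈ E.filter (fun x => j x = jj), w x = ∑ x ∈ E, w x :=
      Finset.sum_fiberwise_of_maps_to hmaps w
    have hex : ∃ jj ∈ J, Real.exp ((n:ℝ) * q) / (J.card : ℝ)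
        < ∑ x ∈ E.filter (fun x => j x = jj), w x := by
      by_contra hcon
      push_neg at hcon
      have : ∑ jj ∈ J, ∑ x ∈ E.filter (fun x => j x = jj), w x
          ≤ ∑ _jj ∈ J, Real.exp ((n:ℝ) * q) / (J.card : ℝ) :=
        Finset.sum_le_sum hcon
      rw [hsplit, Finset.sum_const, nsmul_eq_mul, mul_div_cancel₀ _ hKpos.ne'] at this
      exact absurd hr₀gt (not_lt.2 this)
    obtain ⟨j₀, hj₀J, hj₀⟩ := hex
    set T : ℝ := (j₀ : ℝ) * m with hT
    set E' : Finset X := E.filter (fun x => j x = j₀) with hE'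
    have hE'sub : ∀ x ∈ E', x ∈ Xset f ψ T n := by
      intro x hx
      have hjx : j x = j₀ := (Finset.mem_filter.1 hx).2
      have hS0 : 0 ≤ birkhoff f ψ n x / m := by
        have hb := le_birkhoff_of_le (f := f) hm n x
        have hb0 : 0 ≤ birkhoff f ψ n x := le_trans (by positivity) hb
        exact div_nonneg hb0 hm0.le
      constructor
      · have h1 : birkhoff f ψ n x / m ≤ (j x : ℝ) := Nat.le_ceil _
        rw [div_le_iff₀ hm0] at h1
        rw [hT, ← hjx]
        exact h1
      · have h2 : (j x : ℝ) < birkhoff f ψ n x / m + 1 := by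
          rw [hj]
          exact Nat.ceil_lt_add_one hS0
        have h3 : (j x : ℝ) * m < birkhoff f ψ n x + m := by
          have := mul_lt_mul_of_pos_right h2 hm0
          rw [add_mul, one_mul, div_mul_cancel₀ _ hm0.ne'] at this
          exact this
        rw [hT, ← hjx, birkhoff_succ]
        have := hm (f^[n] x)
        linarith
    have hE'ne : E'.Nonempty := by
      by_contra hemp
      rw [Finset.not_nonempty_iff_eq_empty] at hemp
      rw [hemp] at hj₀
      simp only [Finset.sum_empty] at hj₀
      exact absurd hj₀ (not_lt.2 (by positivity))
    obtain ⟨x₁, hx₁⟩ := hE'ne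
    have hnT : n ∈ STset f ψ T := ⟨x₁, hE'sub x₁ hx₁⟩
    have hT₀T : T₀ ≤ T := by
      have h1 : (n:ℝ) * m ≤ birkhoff f ψ n x₁ := le_birkhoff_of_le hm n x₁
      have h2 := (hE'sub x₁ hx₁).1
      linarith
    have hTpos : 0 < T := by
      have h1 : (n:ℝ) * m ≤ birkhoff f ψ n x₁ := le_birkhoff_of_le hm n x₁
      have h2 := (hE'sub x₁ hx₁).1
      nlinarith
    have hKle : (J.card : ℝ) ≤ (M/m) * n + 2 := by
      rw [hJ, Finset.card_range]
      push_cast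
      have h1 : (jmax : ℝ) < (n:ℝ) * M / m + 1 := by
        rw [hjmax]
        refine Nat.ceil_lt_add_one ?_
        positivity
      have : (n:ℝ) * M / m = (M/m) * n := by ring
      linarith [this ▸ h1]
    -- the key lower bound for Qspan
    set A : ℝ := β * T - |β| * M + (n:ℝ) * (q/2) with hA
    have hQge : Real.exp A / (J.card : ℝ) ≤ Qspan f φ ψ T ε := by
      refine le_Qspan hf hε0 ?_
      rintro r ⟨F, hFspan, rfl⟩
      refine le_trans ?_ (single_le_tsum_indicator (f := f) hm0 hm _
        (fun k => Finset.sum_nonneg fun x _ => (Real.exp_pos _).le) hnT)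
      have hch : ∀ x ∈ E', ∃ y ∈ F n, dynDist f n y x ≤ ε :=
        fun x hx => hFspan n hnT x (hE'sub x hx)
      set σ : X → X := fun x =>
        if h : ∃ y ∈ F n, dynDist f n y x ≤ ε then h.choose else x with hσdef
      have hσ : ∀ x ∈ E', σ x ∈ F n ∧ dynDist f n (σ x) x ≤ ε := by
        intro x hx
        have h := hch x hx
        rw [hσdef]
        simp only [dif_pos h]
        exact ⟨h.choose_spec.1, h.choose_spec.2⟩
      have hinj : ∀ x ∈ E', ∀ y ∈ E', σ x = σ y → x = y := by
        intro x hx y hy hxy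
        by_contra hne
        have hsep := hEsep x (Finset.mem_of_mem_filter x hx) y (Finset.mem_of_mem_filter y hy) hne
        have htri : dynDist f n x y ≤ 2 * ε := by
          calc dynDist f n x y ≤ dynDist f n x (σ x) + dynDist f n (σ x) y :=
                dynDist_triangle f n x (σ x) y
          _ ≤ ε + ε := by
              refine add_le_add ?_ ?_
              · rw [dynDist_symm]
                exact (hσ x hx).2
              · rw [hxy]
                exact (hσ y hy).2
          _ = 2 * ε := by ring
        have := lt_of_lt_of_le hsep (htri.trans hε2)
        exact lt_irrefl _ this
      have hperx : ∀ x ∈ E', Real.exp (A - (n:ℝ) * q) * w x ≤ Real.exp (birkhoff f φ n (σ x)) := by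
        intro x hx
        rw [hw, ← Real.exp_add]
        refine Real.exp_le_exp.2 ?_
        have h1 : β * T - |β| * M ≤ β * birkhoff f ψ n x :=
          le_beta_birkhoff hM hM0.le (hE'sub x hx)
        have h2 : birkhoff f φ' n x = birkhoff f φ n x - β * birkhoff f ψ n x :=
          birkhoff_sub f φ ψ β n x
        have h3 : birkhoff f φ n x - (n:ℝ) * (q/2) ≤ birkhoff f φ n (σ x) := by
          refine birkhoff_close hvar (fun i hi => ?_)
          exact le_trans (dist_le_dynDist f hi (σ x) x) (hσ x hx).2
        rw [hA]
        linarith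
    -- summing up
      calc Real.exp A / (J.card : ℝ)
          = Real.exp (A - (n:ℝ) * q) * (Real.exp ((n:ℝ) * q) / (J.card : ℝ)) := by
            rw [div_eq_mul_inv, div_eq_mul_inv, ← mul_assoc, ← Real.exp_add, sub_add_cancel]
      _ ≤ Real.exp (A - (n:ℝ) * q) * ∑ x ∈ E', w x :=
            mul_le_mul_of_nonneg_left hj₀.le (Real.exp_pos _).le
      _ = ∑ x ∈ E', Real.exp (A - (n:ℝ) * q) * w x := Finset.mul_sum _ _ _
      _ ≤ ∑ x ∈ E', Real.exp (birkhoff f φ n (σ x)) := Finset.sum_le_sum hperx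
      _ = ∑ y ∈ E'.image σ, Real.exp (birkhoff f φ n y) := by rw [Finset.sum_image hinj]
      _ ≤ ∑ y ∈ F n, Real.exp (birkhoff f φ n y) := by
            refine Finset.sum_le_sum_of_subset_of_nonneg ?_ (fun y _ _ => (Real.exp_pos _).le)
            intro y hy
            obtain ⟨x, hx, rfl⟩ := Finset.mem_image.1 hy
            exact (hσ x hx).1
    -- conclude the frequent bound
    refine ⟨T, hT₀T, ?_⟩
    rw [EReal.coe_le_coe_iff]
    have hQpos : 0 < Qspan f φ ψ T ε := lt_of_lt_of_le (by positivity) hQge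
    have hlogQ : A - Real.log (J.card : ℝ) ≤ Real.log (Qspan f φ ψ T ε) := by
      calc A - Real.log (J.card : ℝ) = Real.log (Real.exp A / (J.card : ℝ)) := by
            rw [Real.log_div (Real.exp_ne_zero _) hKpos.ne', Real.log_exp]
      _ ≤ Real.log (Qspan f φ ψ T ε) := Real.log_le_log (by positivity) hQge
    have hnum : 0 ≤ (n:ℝ) * (q/2) - |β| * M - Real.log (J.card : ℝ) := by
      have hlogK : Real.log (J.card : ℝ) ≤ Real.log ((M/m) * n + 2) :=
        Real.log_le_log hKpos hKle
      have hd2 : |β| * M + Real.log ((M/m) * n + 2) ≤ (n:ℝ) * (q/2) := by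
        have := (div_lt_iff₀ hnpos).1 hnd
        nlinarith
      linarith
    calc (β : ℝ) = T⁻¹ * (β * T) := by field_simp
    _ ≤ T⁻¹ * (A - Real.log (J.card : ℝ)) := by
        refine mul_le_mul_of_nonneg_left ?_ (inv_nonneg.2 hTpos.le)
        rw [hA]; linarith
    _ ≤ T⁻¹ * Real.log (Qspan f φ ψ T ε) :=
        mul_le_mul_of_nonneg_left hlogQ (inv_nonneg.2 hTpos.le)
  have hlim : (β : EReal) ≤ Filter.limsup
      (fun T : ℝ => ((T⁻¹ * Real.log (Qspan f φ ψ T ε) : ℝ) : EReal)) atTop :=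
    Filter.le_limsup_of_frequently_le key (by isBoundedDefault)
  refine le_trans hlim (le_iSup₂ (f := fun (ε : ℝ) (_ : 0 < ε) =>
    Filter.limsup (fun T : ℝ => ((T⁻¹ * Real.log (Qspan f φ ψ T ε) : ℝ) : EReal)) atTop) ε hε0)
end G2


set_option maxHeartbeats 1000000 in
/-- if `P(φ-βψ)` is real for all `β`, then `P_ψ(φ)` is the unique root of
`β ↦ P(φ - βψ)`. -/
theorem stmt10 [MetricSpace X] [CompactSpace X] [Nonempty X]
    (f : X → X) (φ ψ : X → ℝ) (hf : Continuous f) (hφ : Continuous φ) (hψ : Continuous ψ)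
    (hpos : ∀ x, 0 < ψ x)
    (hfin : ∀ β : ℝ, ∃ r : ℝ, topPressure f (fun x => φ x - β * ψ x) = (r : EReal)) :
    topPressure f (fun x => φ x - (inducedPressure f φ ψ).toReal * ψ x) = 0 ∧
    ∀ β : ℝ, topPressure f (fun x => φ x - β * ψ x) = 0 →
      (β : EReal) = inducedPressure f φ ψ := by
    classical
  obtain ⟨m, hm0, hm⟩ := exists_pos_lower_bound hψ hpos
  obtain ⟨M, hM⟩ := exists_upper_bound hψ
  have hmM : m ≤ M := le_trans (hm (Classical.arbitrary X)) (hM (Classical.arbitrary X))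
  choose g hg using hfin
  -- the sandwich bounds
  have hup : ∀ β β' : ℝ, β ≤ β' → g β' ≤ g β - (β' - β) * m := by
    intro β β' hle
    have hc : ∀ x, φ x - β' * ψ x ≤ (φ x - β * ψ x) + (-((β' - β) * m)) := by
      intro x
      have : (β' - β) * m ≤ (β' - β) * ψ x :=
        mul_le_mul_of_nonneg_left (hm x) (sub_nonneg.2 hle)
      nlinarith
    have := pressure_le_of_le (φ₁ := fun x => φ x - β' * ψ x) (φ₂ := fun x => φ x - β * ψ x) hf (hφ.sub (continuous_const.mul hψ))
      (hφ.sub (continuous_const.mul hψ)) hc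
    rw [hg β', hg β, ← EReal.coe_add, EReal.coe_le_coe_iff] at this
    linarith
  have hdown : ∀ β β' : ℝ, β ≤ β' → g β - (β' - β) * M ≤ g β' := by
    intro β β' hle
    have hc : ∀ x, φ x - β * ψ x ≤ (φ x - β' * ψ x) + ((β' - β) * M) := by
      intro x
      have : (β' - β) * ψ x ≤ (β' - β) * M :=
        mul_le_mul_of_nonneg_left (hM x) (sub_nonneg.2 hle)
      nlinarith
    have := pressure_le_of_le (φ₁ := fun x => φ x - β * ψ x) (φ₂ := fun x => φ x - β' * ψ x) hf (hφ.sub (continuous_const.mul hψ))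
      (hφ.sub (continuous_const.mul hψ)) hc
    rw [hg β', hg β, ← EReal.coe_add, EReal.coe_le_coe_iff] at this
    linarith
  obtain ⟨c₀, hc₀⟩ := exists_root_of_sandwich hm0 hmM hup hdown
  have hanti : StrictAnti g := strictAnti_of_decay hm0 hup
  -- inducedPressure = c₀
  have hIle : inducedPressure f φ ψ ≤ (c₀ : EReal) := by
    by_contra hcon
    push_neg at hcon
    obtain ⟨b, hb1, hb2⟩ := EReal.exists_between_coe_real hcon
    have hbβ : c₀ < b := by exact_mod_cast hb1
    have hgb : g b < 0 := by
      rw [← hc₀]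
      exact hanti hbβ
    have hneg : topPressure f (fun x => φ x - b * ψ x) < 0 := by
      rw [hg b]
      exact_mod_cast hgb
    have : inducedPressure f φ ψ ≤ (b : EReal) := by
      refine iSup₂_le (fun ε hε => ?_)
      exact upper_estimate hf hφ hψ hm0 hm hM hneg hε
    exact absurd hb2 (not_lt.2 this)
  have hIge : (c₀ : EReal) ≤ inducedPressure f φ ψ := by
    by_contra hcon
    push_neg at hcon
    obtain ⟨b, hb1, hb2⟩ := EReal.exists_between_coe_real hcon
    have hbβ : b < c₀ := by exact_mod_cast hb2
    have hgb : 0 < g b := by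
      rw [← hc₀]
      exact hanti hbβ
    have hposP : 0 < topPressure f (fun x => φ x - b * ψ x) := by
      rw [hg b]
      exact_mod_cast hgb
    have := lower_estimate hf hφ hψ hm0 hm hM hposP
    exact absurd hb1 (not_lt.2 this)
  have hI : inducedPressure f φ ψ = (c₀ : EReal) := le_antisymm hIle hIge
  have htr : (inducedPressure f φ ψ).toReal = c₀ := by
    rw [hI, EReal.toReal_coe]
  constructor
  · rw [htr, hg c₀, hc₀]
    exact EReal.coe_zero
  · intro β hβ
    have hgβ : g β = 0 := by
      have := (hg β).symm.trans hβ
      exact_mod_cast this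
    have : β = c₀ := hanti.injective (hgβ.trans hc₀.symm)
    rw [this, hI]
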